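/- Let S be an association scheme on a finite set X, let T₁ and T₂ be normal closed subsets of S, let p, q, r ∈ S, and let (y,z) ∈ r. Then |y(pT₁) ∩ z(q*T₂)| = Σ_{p' ∈ pT₁} Σ_{q' ∈ qT₂} a_{p'q'r}, where pT₁, qT₂ and q*T₂ denote complex products of subsets of S. In particular, this cardinality depends only on T₁, T₂, p, q and r, and not on the choice of (y,z) ∈ r. -/

import Mathlib

/-!
Common framework for association schemes, following the paper
"A new semidirect product for association schemes".
-/

/-- The diagonal relation `1_X` on a set `X`. -/
def diagRel (X : Type) : Set (X × X) := {w | w.1 = w.2}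

/-- The transpose `s*` of a relation. -/
def transp {X : Type} (s : Set (X × X)) : Set (X × X) := Prod.swap '' s

/-- The structure constant `a_{pqr}`: for `(x,y) ∈ r`, the number of `z` with
`(x,z) ∈ p` and `(z,y) ∈ q` (well-defined for elements of a scheme). -/
noncomputable def aC {X : Type} (p q r : Set (X × X)) : ℕ :=
  sSup {n | ∃ w ∈ r, n = Nat.card {z : X // (w.1, z) ∈ p ∧ (z, w.2) ∈ q}}

/-- `S` is an association scheme on `X`. -/
def IsScheme {X : Type} (S : Set (Set (X × X))) : Prop :=
  (∀ s ∈ S, s.Nonempty) ∧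
  (∀ w : X × X, ∃! s, s ∈ S ∧ w ∈ s) ∧
  diagRel X ∈ S ∧
  (∀ s ∈ S, transp s ∈ S) ∧
  (∀ p ∈ S, ∀ q ∈ S, ∀ r ∈ S, ∀ w ∈ r,
    Nat.card {z : X // (w.1, z) ∈ p ∧ (z, w.2) ∈ q} = aC p q r)

/-- Complex product of two relations relative to a scheme `S`:
`pq = {r ∈ S : a_{pqr} > 0}`. -/
noncomputable def cmulS {X : Type} (S : Set (Set (X × X))) (p q : Set (X × X)) :
    Set (Set (X × X)) :=
  {r | r ∈ S ∧ 0 < aC p q r}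

/-- Complex product of two subsets of a scheme. -/
noncomputable def setMulS {X : Type} (S : Set (Set (X × X)))
    (Pp Qq : Set (Set (X × X))) : Set (Set (X × X)) :=
  ⋃ p ∈ Pp, ⋃ q ∈ Qq, cmulS S p q

/-- `T` is a closed subset of the scheme `S` (i.e. `T ⊆ S` and `T*T ⊆ T`). -/
def IsClosedIn {X : Type} (S T : Set (Set (X × X))) : Prop :=
  T ⊆ S ∧ ∀ p ∈ T, ∀ q ∈ T, cmulS S (transp p) q ⊆ T

/-- `T` is a normal subset of the scheme `S` (i.e. `pT = Tp` for all `p ∈ S`). -/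
noncomputable def IsNormalIn {X : Type} (S T : Set (Set (X × X))) : Prop :=
  ∀ p ∈ S, setMulS S {p} T = setMulS S T {p}

/-- `xs = {y : (x,y) ∈ s}`. -/
def pimg {X : Type} (s : Set (X × X)) (x : X) : Set X := {y | (x, y) ∈ s}

/-- The coset `xT` of a (closed) subset `T` of a scheme. -/
def coset {X : Type} (T : Set (Set (X × X))) (x : X) : Set X :=
  {y | ∃ t ∈ T, (x, y) ∈ t}

/-- The set `X/T` of cosets. -/
def cosets {X : Type} (T : Set (Set (X × X))) : Set (Set X) :=
  {C | ∃ x, C = coset T x}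

/-- The quotient relation `s^T` on cosets. -/
def quotRel {X : Type} (T : Set (Set (X × X))) (s : Set (X × X)) :
    Set (Set X × Set X) :=
  {w | ∃ x₁ x₂, w = (coset T x₁, coset T x₂) ∧
    ∃ p ∈ s, p.1 ∈ coset T x₁ ∧ p.2 ∈ coset T x₂}

/-- The relations of the quotient scheme `S//T`. -/
def quotS {X : Type} (S T : Set (Set (X × X))) : Set (Set (Set X × Set X)) :=
  {r | ∃ s ∈ S, r = quotRel T s}

/-- A presentation of a (based) scheme: a set of points inside an ambient type,
a set of relations, and a basepoint. -/
structure Pres (P : Type) where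
  pts : Set P
  rels : Set (Set (P × P))
  base : P

/-- A scheme `S` on the whole of `X`, based at `x0`, as a presentation. -/
def fullPres {X : Type} (S : Set (Set (X × X))) (x0 : X) : Pres X :=
  ⟨Set.univ, S, x0⟩

/-- The quotient scheme `S//T` on `X/T`, based at `x0 T`, as a presentation. -/
def quotPres {X : Type} (S T : Set (Set (X × X))) (x0 : X) : Pres (Set X) :=
  ⟨cosets T, quotS S T, coset T x0⟩

/-- The subscheme of a scheme defined by the coset `xT` of a closed subset `T`,
as a presentation. -/
def subPres {X : Type} (T : Set (Set (X × X))) (x : X) : Pres X :=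
  ⟨coset T x, {r | ∃ t ∈ T, r = t ∩ (coset T x ×ˢ coset T x)}, x⟩

/-- `f` is a morphism of schemes between two presentations: it maps points to
points, and pairs lying in the same relation to pairs lying in the same relation. -/
def IsMorOn {P Q : Type} (A : Pres P) (B : Pres Q) (f : P → Q) : Prop :=
  Set.MapsTo f A.pts B.pts ∧
  ∀ s ∈ A.rels, ∀ w ∈ s, ∀ w' ∈ s,
    ∃ t ∈ B.rels, (f w.1, f w.2) ∈ t ∧ (f w'.1, f w'.2) ∈ t

/-- The induced map on scheme elements sends `s` to `t` (i.e. `s φ_S = t`):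
every pair of `s` is mapped into `t`. -/
def elemMapsTo {P Q : Type} (f : P → Q) (s : Set (P × P)) (t : Set (Q × Q)) : Prop :=
  ∀ w ∈ s, (f w.1, f w.2) ∈ t

/-- `f` is an isomorphism of schemes: a morphism which is bijective on points and
whose induced map on scheme elements is bijective. -/
def IsIsoOn {P Q : Type} (A : Pres P) (B : Pres Q) (f : P → Q) : Prop :=
  IsMorOn A B f ∧ Set.BijOn f A.pts B.pts ∧
  ∀ t ∈ B.rels, ∃! s, s ∈ A.rels ∧ elemMapsTo f s t

/-- A based isomorphism of schemes. -/
def IsBasedIsoOn {P Q : Type} (A : Pres P) (B : Pres Q) (f : P → Q) : Prop :=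
  IsIsoOn A B f ∧ f A.base = B.base

/-- A based association scheme on a finite based set. -/
structure BScheme : Type 1 where
  X : Type
  fin : Fintype X
  base : X
  S : Set (Set (X × X))
  isScheme : IsScheme S

/-- A morphism in the category 𝒞: a normal closed subset on each side together
with a based isomorphism between the corresponding quotient schemes. -/
structure HomC (A B : BScheme) where
  TN : Set (Set (A.X × A.X))
  UN : Set (Set (B.X × B.X))
  TN_cl : IsClosedIn A.S TN
  TN_n : IsNormalIn A.S TN
  UN_cl : IsClosedIn B.S UN
  UN_n : IsNormalIn B.S UN
  f : Set A.X → Set B.X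
  iso : IsBasedIsoOn (quotPres A.S TN A.base) (quotPres B.S UN B.base) f

/-- `t^{T_φ} φ̃ = u^{U_φ}`: the induced map on quotient scheme elements sends
the class of `t` to the class of `u`. -/
def elemRel {A B : BScheme} (φ : HomC A B) (t : Set (A.X × A.X))
    (u : Set (B.X × B.X)) : Prop :=
  elemMapsTo φ.f (quotRel φ.TN t) (quotRel φ.UN u)

/-- The normal closed subset `T_{φψ}` of the composite. -/
def Tcomp {A B C : BScheme} (φ : HomC A B) (ψ : HomC B C) :
    Set (Set (A.X × A.X)) :=
  {t | t ∈ A.S ∧ ∃ u ∈ B.S, elemRel φ t u ∧ elemRel ψ u (diagRel C.X)}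

/-- The normal closed subset `V_{φψ}` of the composite. -/
def Vcomp {A B C : BScheme} (φ : HomC A B) (ψ : HomC B C) :
    Set (Set (C.X × C.X)) :=
  {v | v ∈ C.S ∧ ∃ u ∈ B.S, elemRel φ (diagRel A.X) u ∧ elemRel ψ u v}

/-- `ρ` is a composite of `φ` and `ψ` in the category 𝒞. -/
def IsComposite {A B C : BScheme} (φ : HomC A B) (ψ : HomC B C) (ρ : HomC A C) : Prop :=
  ρ.TN = Tcomp φ ψ ∧ ρ.UN = Vcomp φ ψ ∧
  ∀ (x : A.X) (y : B.X) (z : C.X),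
    φ.f (coset φ.TN x) = coset φ.UN y →
    ψ.f (coset ψ.TN y) = coset ψ.UN z →
    ρ.f (coset (Tcomp φ ψ) x) = coset (Vcomp φ ψ) z

/-- The identity morphism of 𝒞 at `A`: both normal closed subsets are `{1_X}`
and the isomorphism is the identity of `A//{1_X}`. -/
def IsIdHom {A : BScheme} (ι : HomC A A) : Prop :=
  ι.TN = {diagRel A.X} ∧ ι.UN = {diagRel A.X} ∧
  ∀ x : A.X, ι.f (coset {diagRel A.X} x) = coset {diagRel A.X} x

/-- A `τ_T`-scheme on the based set underlying `T`. -/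
structure TauSchemeOn (T : BScheme) where
  rels : Set (Set (T.X × T.X))
  isScheme : IsScheme rels
  alpha : Set (T.X × T.X) → Set (T.X × T.X)
  alpha_bij : Set.BijOn alpha T.S rels
  alpha_one : alpha (diagRel T.X) = diagRel T.X
  alpha_star : ∀ p ∈ T.S, alpha (transp p) = transp (alpha p)
  alpha_const : ∀ p ∈ T.S, ∀ q ∈ T.S, ∀ r ∈ T.S,
    aC p q r = aC (alpha p) (alpha q) (alpha r)

/-- The based scheme underlying a `τ`-scheme. -/
abbrev TauSchemeOn.toB {T : BScheme} (Z : TauSchemeOn T) : BScheme :=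
  ⟨T.X, T.fin, T.base, Z.rels, Z.isScheme⟩

/-- An action `ζ` of a based scheme `U` on a based scheme `T`. -/
structure SchemeAction (U T : BScheme) where
  /-- the `τ`-scheme `ζ_y = (T_y, α^y)` for each `y ∈ Y` -/
  Z : U.X → TauSchemeOn T
  /-- the morphism `ζ_{y₁}^{y₂} ∈ Hom_𝒞(T_{y₁}, T_{y₂})` -/
  hom : ∀ y1 y2 : U.X, HomC (Z y1).toB (Z y2).toB
  /-- (1) `T_{y*} = T` -/
  base_rels : (Z U.base).rels = T.S
  /-- (1) `α^{y*} = id` -/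
  base_alpha : ∀ p, (Z U.base).alpha p = p
  /-- (2) `ζ_y^y` is the identity morphism -/
  hom_refl_TN : ∀ y : U.X, (hom y y).TN = {diagRel T.X}
  hom_refl_UN : ∀ y : U.X, (hom y y).UN = {diagRel T.X}
  hom_refl_f : ∀ (y : U.X) (x : T.X),
    (hom y y).f (coset {diagRel T.X} x) = coset {diagRel T.X} x
  /-- (3) `ζ_{y₂}^{y₁} = (ζ_{y₁}^{y₂})*` -/
  hom_symm_TN : ∀ y1 y2 : U.X, (hom y2 y1).TN = (hom y1 y2).UN
  hom_symm_UN : ∀ y1 y2 : U.X, (hom y2 y1).UN = (hom y1 y2).TN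
  hom_symm_f : ∀ y1 y2 : U.X,
    Set.InvOn (hom y2 y1).f (hom y1 y2).f
      (cosets (hom y1 y2).TN) (cosets (hom y1 y2).UN)
  /-- (4) `ζ_{y₁}^{y₂}(τ)` depends only on the element `u ∈ U` containing `(y₁,y₂)` -/
  zeta_welldef : ∀ u ∈ U.S, ∀ y1 y2 y1' y2' : U.X, (y1, y2) ∈ u → (y1', y2') ∈ u →
    ∀ Pp : Set (Set (T.X × T.X)),
      {u' | u' ∈ T.S ∧ ∃ t ∈ Pp,
        elemRel (hom y1 y2) ((Z y1).alpha t) ((Z y2).alpha u')} =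
      {u' | u' ∈ T.S ∧ ∃ t ∈ Pp,
        elemRel (hom y1' y2') ((Z y1').alpha t) ((Z y2').alpha u')}
  /-- (5) `ζ_{y₁}^{y₃} ≤ ζ_{y₁}^{y₂} ζ_{y₂}^{y₃}` -/
  le_comp : ∀ y1 y2 y3 : U.X,
    (hom y1 y3).TN ⊆ Tcomp (hom y1 y2) (hom y2 y3) ∧
    (hom y1 y3).UN ⊆ Vcomp (hom y1 y2) (hom y2 y3) ∧
    ∀ x x2 x3 : T.X,
      (hom y1 y2).f (coset (hom y1 y2).TN x) = coset (hom y1 y2).UN x2 →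
      (hom y2 y3).f (coset (hom y2 y3).TN x2) = coset (hom y2 y3).UN x3 →
      (hom y1 y3).f (coset (hom y1 y3).TN x) ⊆
        coset (Vcomp (hom y1 y2) (hom y2 y3)) x3

/-- The map `ζ_u` on subsets of `τ` induced by any `(y₁,y₂) ∈ u`. -/
def SchemeAction.zetaU {U T : BScheme} (act : SchemeAction U T)
    (u : Set (U.X × U.X)) (Pp : Set (Set (T.X × T.X))) : Set (Set (T.X × T.X)) :=
  {u' | ∃ y1 y2 : U.X, (y1, y2) ∈ u ∧ u' ∈ T.S ∧
    ∃ t ∈ Pp, elemRel (act.hom y1 y2) ((act.Z y1).alpha t) ((act.Z y2).alpha u')}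

/-- The relation `[u,t]` on `Y × X`. -/
def SchemeAction.rel {U T : BScheme} (act : SchemeAction U T)
    (u : Set (U.X × U.X)) (t : Set (T.X × T.X)) :
    Set ((U.X × T.X) × (U.X × T.X)) :=
  {w | (w.1.1, w.2.1) ∈ u ∧
    ((act.hom w.1.1 w.2.1).f (coset (act.hom w.1.1 w.2.1).TN w.1.2),
      coset (act.hom w.1.1 w.2.1).UN w.2.2) ∈
      quotRel (act.hom w.1.1 w.2.1).UN ((act.Z w.2.1).alpha t)}

/-- The semidirect product `U ⋉_ζ T` as a set of relations on `Y × X`. -/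
def SchemeAction.sdp {U T : BScheme} (act : SchemeAction U T) :
    Set (Set ((U.X × T.X) × (U.X × T.X))) :=
  {r | ∃ u ∈ U.S, ∃ t ∈ T.S, r = act.rel u t}

/-- The valency `n_s = a_{s s* 1}` of a relation. -/
noncomputable def nval {X : Type} (s : Set (X × X)) : ℕ :=
  aC s (transp s) (diagRel X)

section Aux

open Classical

lemma mem_transp {X : Type} {s : Set (X × X)} {a b : X} :
    (a, b) ∈ transp s ↔ (b, a) ∈ s := by
  constructor
  · rintro ⟨⟨c, d⟩, h, he⟩
    have h1 : d = a := congrArg Prod.fst he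
    have h2 : c = b := congrArg Prod.snd he
    subst h1; subst h2; exact h
  · intro h; exact ⟨(b, a), h, rfl⟩

lemma transp_transp {X : Type} (s : Set (X × X)) : transp (transp s) = s := by
  ext ⟨a, b⟩; simp [mem_transp]

/-- `a_{q* p* r*} = a_{pqr}`. -/
lemma aC_transp {X : Type} [Fintype X] {S : Set (Set (X × X))} (hS : IsScheme S)
    {p q r : Set (X × X)} (hp : p ∈ S) (hq : q ∈ S) (hr : r ∈ S) :
    aC (transp q) (transp p) (transp r) = aC p q r := by
  obtain ⟨⟨a, b⟩, hw⟩ := hS.1 r hr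
  have h1 := hS.2.2.2.2 p hp q hq r hr (a, b) hw
  have htp := hS.2.2.2.1 p hp
  have htq := hS.2.2.2.1 q hq
  have htr := hS.2.2.2.1 r hr
  have h2 := hS.2.2.2.2 _ htq _ htp _ htr (b, a) (mem_transp.2 hw)
  rw [← h1, ← h2]
  exact Nat.card_congr (Equiv.subtypeEquivRight fun z => by
    simp only [mem_transp]; tauto)

/-- A closed subset is closed under transposition. -/
lemma transp_mem_closed {X : Type} [Fintype X] {S T : Set (Set (X × X))}
    (hS : IsScheme S) (hT : IsClosedIn S T) {t : Set (X × X)} (ht : t ∈ T) :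
    transp t ∈ T := by
  have htS : t ∈ S := hT.1 ht
  have httS : transp t ∈ S := hS.2.2.2.1 t htS
  obtain ⟨⟨a, b⟩, hab⟩ := hS.1 t htS
  have hdiag : diagRel X ∈ T := by
    apply hT.2 t ht t ht
    refine ⟨hS.2.2.1, ?_⟩
    have := hS.2.2.2.2 (transp t) httS t htS (diagRel X) hS.2.2.1 (b, b) rfl
    rw [← this, Nat.card_pos_iff]
    exact ⟨⟨⟨a, mem_transp.2 hab, hab⟩⟩, inferInstance⟩
  apply hT.2 t ht (diagRel X) hdiag
  refine ⟨httS, ?_⟩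
  have := hS.2.2.2.2 (transp t) httS (diagRel X) hS.2.2.1 (transp t) httS
    (b, a) (mem_transp.2 hab)
  rw [← this, Nat.card_pos_iff]
  exact ⟨⟨⟨a, mem_transp.2 hab, rfl⟩⟩, inferInstance⟩

lemma mem_setMulS_left {X : Type} {S T : Set (Set (X × X))} {a s : Set (X × X)} :
    s ∈ setMulS S {a} T ↔ ∃ t ∈ T, s ∈ S ∧ 0 < aC a t s := by
  simp [setMulS, cmulS]; tauto

lemma mem_setMulS_right {X : Type} {S T : Set (Set (X × X))} {a s : Set (X × X)} :
    s ∈ setMulS S T {a} ↔ ∃ t ∈ T, s ∈ S ∧ 0 < aC t a s := by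
  simp [setMulS, cmulS]; tauto

/-- For `T` normal closed, `s ∈ q*T ↔ s* ∈ qT`. -/
lemma transp_mem_setMul {X : Type} [Fintype X] {S T : Set (Set (X × X))}
    (hS : IsScheme S) (hTc : IsClosedIn S T) (hTn : IsNormalIn S T)
    {q s : Set (X × X)} (hq : q ∈ S) :
    s ∈ setMulS S {transp q} T ↔ transp s ∈ setMulS S {q} T := by
  have htq : transp q ∈ S := hS.2.2.2.1 q hq
  constructor
  · intro hs
    rw [hTn (transp q) htq] at hs
    obtain ⟨t, htT, hsS, hpos⟩ := mem_setMulS_right.1 hs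
    have htS : t ∈ S := hTc.1 htT
    have : aC (transp (transp q)) (transp t) (transp s) = aC t (transp q) s :=
      aC_transp hS htS htq hsS
    rw [transp_transp] at this
    exact mem_setMulS_left.2 ⟨transp t, transp_mem_closed hS hTc htT,
      hS.2.2.2.1 s hsS, by rw [this]; exact hpos⟩
  · intro hs
    obtain ⟨t, htT, hsS, hpos⟩ := mem_setMulS_left.1 hs
    have htS : t ∈ S := hTc.1 htT
    have : aC (transp t) (transp q) (transp (transp s)) = aC q t (transp s) :=
      aC_transp hS hq htS hsS
    rw [transp_transp] at this
    rw [hTn (transp q) htq]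
    refine mem_setMulS_right.2 ⟨transp t, transp_mem_closed hS hTc htT, ?_, ?_⟩
    · have := hS.2.2.2.1 (transp s) hsS; rwa [transp_transp] at this
    · rw [this]; exact hpos

lemma setMulS_subset {X : Type} {S T : Set (Set (X × X))} {a : Set (X × X)} :
    setMulS S {a} T ⊆ S := by
  intro s hs
  obtain ⟨t, _, hsS, _⟩ := mem_setMulS_left.1 hs
  exact hsS

/-- The key counting lemma. -/
lemma card_count {X : Type} [Fintype X] {S : Set (Set (X × X))} (hS : IsScheme S)
    {A B : Set (Set (X × X))} (hA : A ⊆ S) (hB : B ⊆ S)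
    {r : Set (X × X)} (hr : r ∈ S) {y z : X} (hyz : (y, z) ∈ r) :
    Nat.card ↥{x : X | (∃ p' ∈ A, (y, x) ∈ p') ∧ ∃ q' ∈ B, (x, z) ∈ q'} =
      ∑ᶠ p' ∈ A, ∑ᶠ q' ∈ B, aC p' q' r := by
  have hAf : A.Finite := Set.toFinite A
  have hBf : B.Finite := Set.toFinite B
  set SA := hAf.toFinset with hSA
  set SB := hBf.toFinset with hSB
  have hmemA : ∀ s, s ∈ SA ↔ s ∈ A := fun s => hAf.mem_toFinset
  have hmemB : ∀ s, s ∈ SB ↔ s ∈ B := fun s => hBf.mem_toFinset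
  set E : Set (X × X) → Set (X × X) → Finset X :=
    fun p' q' => (Set.toFinite {x : X | (y, x) ∈ p' ∧ (x, z) ∈ q'}).toFinset with hE
  have hmemE : ∀ p' q' x, x ∈ E p' q' ↔ (y, x) ∈ p' ∧ (x, z) ∈ q' :=
    fun p' q' x => Set.Finite.mem_toFinset _
  -- the intersection as a Finset biUnion
  have hset : {x : X | (∃ p' ∈ A, (y, x) ∈ p') ∧ ∃ q' ∈ B, (x, z) ∈ q'} =
      ↑(SA.biUnion fun p' => SB.biUnion fun q' => E p' q') := by
    ext x
    simp only [Set.mem_setOf_eq, Finset.coe_biUnion, Set.mem_iUnion, Finset.mem_coe,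
      hmemA, hmemB, hmemE]
    constructor
    · rintro ⟨⟨p', hp', h1⟩, ⟨q', hq', h2⟩⟩
      exact ⟨p', hp', q', hq', h1, h2⟩
    · rintro ⟨p', hp', q', hq', h1, h2⟩
      exact ⟨⟨p', hp', h1⟩, ⟨q', hq', h2⟩⟩
  -- uniqueness of relations
  have huniq : ∀ (w : X × X) (s s' : Set (X × X)), s ∈ S → s' ∈ S →
      w ∈ s → w ∈ s' → s = s' := by
    intro w s s' hs hs' hws hws'
    obtain ⟨u, _, hu⟩ := hS.2.1 w
    rw [hu s ⟨hs, hws⟩, hu s' ⟨hs', hws'⟩]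
  rw [hset, Nat.card_coe_set_eq, Set.ncard_coe_finset]
  rw [Finset.card_biUnion]
  · have hrw : ∀ p' ∈ SA, (SB.biUnion fun q' => E p' q').card =
        ∑ᶠ q' ∈ B, aC p' q' r := by
      intro p' hp'
      rw [Finset.card_biUnion]
      · rw [← hBf.coe_toFinset, finsum_mem_coe_finset]
        apply Finset.sum_congr rfl
        intro q' hq'
        have hcard := hS.2.2.2.2 p' (hA ((hmemA p').1 hp')) q' (hB ((hmemB q').1 hq'))
          r hr (y, z) hyz
        rw [← hcard]
        exact (Nat.card_eq_card_finite_toFinset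
          (Set.toFinite {x : X | (y, x) ∈ p' ∧ (x, z) ∈ q'})).symm
      · intro q1 h1 q2 h2 hne
        rw [Function.onFun, Finset.disjoint_left]
        intro x hx1 hx2
        exact hne (huniq (x, z) q1 q2 (hB ((hmemB q1).1 h1)) (hB ((hmemB q2).1 h2))
          ((hmemE p' q1 x).1 hx1).2 ((hmemE p' q2 x).1 hx2).2)
    rw [Finset.sum_congr rfl hrw, ← finsum_mem_coe_finset]
    rw [hAf.coe_toFinset]
  · intro p1 h1 p2 h2 hne
    rw [Function.onFun, Finset.disjoint_left]
    intro x hx1 hx2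
    simp only [Finset.mem_biUnion] at hx1 hx2
    obtain ⟨q1, _, hxq1⟩ := hx1
    obtain ⟨q2, _, hxq2⟩ := hx2
    exact hne (huniq (y, x) p1 p2 (hA ((hmemA p1).1 h1)) (hA ((hmemA p2).1 h2))
      ((hmemE p1 q1 x).1 hxq1).1 ((hmemE p2 q2 x).1 hxq2).1)

lemma master {X : Type} [Fintype X] {S : Set (Set (X × X))} (hS : IsScheme S)
    {T1 T2 : Set (Set (X × X))}
    (h2c : IsClosedIn S T2) (h2n : IsNormalIn S T2)
    {p q r : Set (X × X)} (hq : q ∈ S) (hr : r ∈ S)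
    (hA : setMulS S {p} T1 ⊆ S)
    (y z : X) (hyz : (y, z) ∈ r) :
    Nat.card ↥(coset (setMulS S {p} T1) y ∩ coset (setMulS S {transp q} T2) z) =
      ∑ᶠ p' ∈ setMulS S {p} T1, ∑ᶠ q' ∈ setMulS S {q} T2, aC p' q' r := by
  have hset : coset (setMulS S {p} T1) y ∩ coset (setMulS S {transp q} T2) z =
      {x : X | (∃ p' ∈ setMulS S {p} T1, (y, x) ∈ p') ∧
        ∃ q' ∈ setMulS S {q} T2, (x, z) ∈ q'} := by
    ext x
    simp only [Set.mem_inter_iff, coset, Set.mem_setOf_eq]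
    constructor
    · rintro ⟨h1, s, hs, hzx⟩
      exact ⟨h1, transp s, (transp_mem_setMul hS h2c h2n hq).1 hs, mem_transp.2 hzx⟩
    · rintro ⟨h1, q', hq', hxz⟩
      refine ⟨h1, transp q', ?_, mem_transp.2 hxz⟩
      rw [transp_mem_setMul hS h2c h2n hq, transp_transp]
      exact hq'
  rw [hset]
  exact card_count hS hA setMulS_subset hr hyz

end Aux

theorem stmt5 (X : Type) [Fintype X] (S : Set (Set (X × X))) (hS : IsScheme S)
    (T1 T2 : Set (Set (X × X)))
    (h1c : IsClosedIn S T1) (h1n : IsNormalIn S T1)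
    (h2c : IsClosedIn S T2) (h2n : IsNormalIn S T2)
    (p q r : Set (X × X)) (hp : p ∈ S) (hq : q ∈ S) (hr : r ∈ S)
    (y z : X) (hyz : (y, z) ∈ r) :
    Nat.card ↥(coset (setMulS S {p} T1) y ∩ coset (setMulS S {transp q} T2) z) =
      (∑ᶠ p' ∈ setMulS S {p} T1, ∑ᶠ q' ∈ setMulS S {q} T2, aC p' q' r) ∧
    ∀ y' z' : X, (y', z') ∈ r →
      Nat.card ↥(coset (setMulS S {p} T1) y' ∩ coset (setMulS S {transp q} T2) z') =
      Nat.card ↥(coset (setMulS S {p} T1) y ∩ coset (setMulS S {transp q} T2) z) := by 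
  refine ⟨master hS h2c h2n hq hr setMulS_subset y z hyz, fun y' z' h => ?_⟩
  rw [master hS h2c h2n hq hr setMulS_subset y' z' h,
    master hS h2c h2n hq hr setMulS_subset y z hyz]
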